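/- Let V be a finite set and let Φ be a pure Horn CNF on V, i.e. a finite set of clauses (A, v) with A ⊆ V and v ∈ V∖A, and let h_Φ be the Boolean function it defines. Let K(Φ) be the family of inclusion-minimal keys of h_Φ. Let D be a directed graph on vertex set K(Φ) such that for every K ∈ K(Φ), every v ∈ K, and every clause (A, v) ∈ Φ with head v, there is a directed edge from K to some K' ∈ K(Φ) with K' ⊆ (K∖{v}) ∪ A. Then D is strongly connected: for any two minimal keys K_1, K_2 ∈ K(Φ) there is a directed path in D from K_1 to K_2. -/

import Mathlib

open scoped Classical

variable {V : Type*} [Fintype V] [DecidableEq V]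

/-- A Boolean function `h` on `V` is pure Horn if its set of true assignments contains the
all-true assignment and is closed under componentwise AND. -/
def PureHorn (h : (V → Bool) → Bool) : Prop :=
  h (fun _ => true) = true ∧
  ∀ x y : V → Bool, h x = true → h y = true → h (fun v => x v && y v) = true

/-- The clause `A → v` is an implicate of `h`: every true assignment of `h` that is true on
every element of `A` is also true at `v`. -/
def Implicate (h : (V → Bool) → Bool) (A : Finset V) (v : V) : Prop :=
  ∀ x : V → Bool, h x = true → (∀ a ∈ A, x a = true) → x v = true

/-- `K` is a key of `h` if `K → v` is an implicate of `h` for every `v ∈ V \ K`. -/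
def IsKey (h : (V → Bool) → Bool) (K : Finset V) : Prop :=
  ∀ v ∉ K, Implicate h K v

/-- `𝒦(h)`: the family of inclusion-minimal keys of `h`. -/
def minKeys (h : (V → Bool) → Bool) : Set (Finset V) :=
  {K | IsKey h K ∧ ∀ K', IsKey h K' → K' ⊆ K → K' = K}

/-- `Φ_𝓑`: the pure Horn function whose true assignments are exactly those `x` such that for
every `B ∈ 𝓑` on which `x` is identically true, `x` is identically true on all of `V`. -/
noncomputable def PhiB (𝓑 : Set (Finset V)) : (V → Bool) → Bool :=
  fun x => decide (∀ B ∈ 𝓑, (∀ u ∈ B, x u = true) → ∀ v : V, x v = true)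

/-- The Boolean function defined by a pure Horn CNF, given as a finite set of clauses
`(A, v)`. -/
def cnfFun (Φ : Finset (Finset V × V)) : (V → Bool) → Bool :=
  fun x => decide (∀ c ∈ Φ, (∃ a ∈ c.1, x a = false) ∨ x c.2 = true)

set_option linter.unusedSectionVars false

/-- Forward-chaining stages from a base set `L`. -/
noncomputable def hornStage (Φ : Finset (Finset V × V)) (L : Finset V) : ℕ → Finset V
  | 0 => L
  | (i+1) => hornStage Φ L i ∪ (Φ.filter (fun c => c.1 ⊆ hornStage Φ L i)).image Prod.snd

theorem hornStage_mono (Φ : Finset (Finset V × V)) (L : Finset V) :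
    Monotone (hornStage Φ L) := by
  apply monotone_nat_of_le_succ
  intro n
  simp [hornStage]

theorem hornStage_reach (Φ : Finset (Finset V × V)) (L : Finset V)
    (hL : IsKey (cnfFun Φ) L) : ∀ v : V, ∃ i, v ∈ hornStage Φ L i := by
  set x : V → Bool := fun u => decide (∃ i, u ∈ hornStage Φ L i) with hx
  have hxt : ∀ u, x u = true ↔ ∃ i, u ∈ hornStage Φ L i := by
    intro u; simp [hx]
  have hsat : cnfFun Φ x = true := by
    rw [cnfFun, decide_eq_true_iff]
    intro c hc
    by_cases hall : ∀ a ∈ c.1, x a = true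
    · right
      have hsub : ∃ i, c.1 ⊆ hornStage Φ L i := by
        refine ⟨c.1.sup (fun a => if h : ∃ i, a ∈ hornStage Φ L i then Nat.find h else 0), ?_⟩
        intro a ha
        have h : ∃ i, a ∈ hornStage Φ L i := (hxt a).1 (hall a ha)
        refine hornStage_mono Φ L ?_ (Nat.find_spec h)
        have := Finset.le_sup (f := fun a => if h : ∃ i, a ∈ hornStage Φ L i then Nat.find h else 0) ha
        simpa [h] using this
      obtain ⟨i, hi⟩ := hsub
      rw [hxt]
      refine ⟨i + 1, ?_⟩
      simp only [hornStage, Finset.mem_union, Finset.mem_image]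
      right
      exact ⟨c, Finset.mem_filter.2 ⟨hc, hi⟩, rfl⟩
    · left
      push_neg at hall
      obtain ⟨a, ha, hfa⟩ := hall
      exact ⟨a, ha, by simpa using hfa⟩
  intro v
  by_cases hv : v ∈ L
  · exact ⟨0, hv⟩
  · have := hL v hv x hsat (fun a ha => (hxt a).2 ⟨0, ha⟩)
    exact (hxt v).1 this

/-- Let `Φ` be a pure Horn CNF and let `D` be a directed graph (edge relation `E`) on the
minimal keys `𝒦(Φ)` such that for every minimal key `K`, every `v ∈ K` and every clause
`(A, v) ∈ Φ` with head `v` there is an edge from `K` to some minimal key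
`K' ⊆ (K ∖ {v}) ∪ A`.  Then `D` is strongly connected. -/
theorem stmt10 (Φ : Finset (Finset V × V)) (hΦ : ∀ c ∈ Φ, c.2 ∉ c.1)
    (E : Finset V → Finset V → Prop)
    (hvert : ∀ K K' : Finset V, E K K' → K ∈ minKeys (cnfFun Φ) ∧ K' ∈ minKeys (cnfFun Φ))
    (hedge : ∀ K ∈ minKeys (cnfFun Φ), ∀ v ∈ K, ∀ c ∈ Φ, c.2 = v →
      ∃ K' ∈ minKeys (cnfFun Φ), K' ⊆ (K \ {v}) ∪ c.1 ∧ E K K') :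
    ∀ K₁ ∈ minKeys (cnfFun Φ), ∀ K₂ ∈ minKeys (cnfFun Φ),
      Relation.ReflTransGen E K₁ K₂ := by
  intro K₁ hK₁ K₂ hK₂
  have hex : ∀ u, ∃ i, u ∈ hornStage Φ K₂ i := hornStage_reach Φ K₂ hK₂.1
  set rnk : V → ℕ := fun u => Nat.find (hex u) with hrnk
  set b : ℕ := Fintype.card V + 1 with hb
  set w : Finset V → ℕ := fun K => ∑ u ∈ K, b ^ rnk u with hw
  suffices h : ∀ n K, K ∈ minKeys (cnfFun Φ) → w K = n → Relation.ReflTransGen E K K₂ from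
    h (w K₁) K₁ hK₁ rfl
  intro n
  induction n using Nat.strong_induction_on with
  | _ n IH =>
    intro K hK hwn
    by_cases hsub : K ⊆ K₂
    · have hKeq : K = K₂ := hK₂.2 K hK.1 hsub
      exact hKeq ▸ Relation.ReflTransGen.refl
    · obtain ⟨v, hvK, hvL⟩ := Finset.not_subset.1 hsub
      have hv1 : rnk v ≠ 0 := by
        intro h0
        have : v ∈ hornStage Φ K₂ 0 := by
          have := Nat.find_spec (hex v)
          rw [show Nat.find (hex v) = rnk v from rfl, h0] at this
          exact this
        exact hvL this
      obtain ⟨m, hm⟩ := Nat.exists_eq_succ_of_ne_zero hv1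
      have hvst : v ∈ hornStage Φ K₂ (m + 1) := by
        have := Nat.find_spec (hex v)
        rw [show Nat.find (hex v) = rnk v from rfl, hm] at this
        exact this
      have hvnot : v ∉ hornStage Φ K₂ m := by
        apply Nat.find_min (hex v)
        rw [show Nat.find (hex v) = rnk v from rfl, hm]
        omega
      have hvim : v ∈ (Φ.filter (fun c => c.1 ⊆ hornStage Φ K₂ m)).image Prod.snd := by
        simp only [hornStage, Finset.mem_union] at hvst
        tauto
      obtain ⟨c, hcmem, hc2⟩ := Finset.mem_image.1 hvim
      obtain ⟨hcΦ, hcsub⟩ := Finset.mem_filter.1 hcmem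
      obtain ⟨K', hK', hK'sub, hEK⟩ := hedge K hK v hvK c hcΦ hc2
      have hranks : ∀ a ∈ c.1, rnk a ≤ m := fun a ha => Nat.find_le (hcsub ha)
      have hsumA : (∑ u ∈ c.1, b ^ rnk u) < b ^ (m + 1) := by
        calc (∑ u ∈ c.1, b ^ rnk u) ≤ ∑ _u ∈ c.1, b ^ m := by
              apply Finset.sum_le_sum
              intro a ha
              exact Nat.pow_le_pow_right (by omega) (hranks a ha)
          _ = c.1.card * b ^ m := by rw [Finset.sum_const, smul_eq_mul]
          _ ≤ Fintype.card V * b ^ m := by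
              exact Nat.mul_le_mul_right _ (Finset.card_le_univ c.1)
          _ < b ^ (m + 1) := by
              rw [pow_succ, hb]
              have hbpos : 0 < b ^ m := pow_pos (by omega) m
              calc Fintype.card V * b ^ m = b ^ m * Fintype.card V := Nat.mul_comm _ _
                _ < b ^ m * (Fintype.card V + 1) := by
                    exact mul_lt_mul_of_pos_left (by omega) hbpos
      have hwlt : w K' < w K := by
        have h1 : w K' ≤ w ((K.erase v) ∪ c.1) := by
          apply Finset.sum_le_sum_of_subset
          rwa [Finset.sdiff_singleton_eq_erase] at hK'sub
        have h2 : w ((K.erase v) ∪ c.1) ≤ w (K.erase v) + w c.1 := by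
          have := Finset.sum_union_inter (s₁ := K.erase v) (s₂ := c.1) (f := fun u => b ^ rnk u)
          simp only [hw]
          omega
        have h3 : w K = b ^ rnk v + w (K.erase v) :=
          (Finset.add_sum_erase K (fun u => b ^ rnk u) hvK).symm
        have h4 : w c.1 < b ^ rnk v := by rw [hm]; exact hsumA
        omega
      exact Relation.ReflTransGen.head hEK (IH (w K') (hwn ▸ hwlt) K' hK' rfl)
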